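/- Let K be a class of finite simple graphs with bounded expansion, witnessed by constants c_1, c_2, … with wcol_k(G) ≤ c_k for all k and all G ∈ K. Then for every odd positive integer p, every graph G ∈ K satisfies χ(G^[♮p]) ≤ c_{2p-1}; in particular there is a constant C = C(K,p) such that χ(G^[♮p]) ≤ C for all G ∈ K. -/

import Mathlib

open SimpleGraph

variable {V : Type*}

/-- The exact distance-`p` graph: distinct vertices adjacent iff their distance in `G` is exactly `p`. -/
def exactDistanceGraph (G : SimpleGraph V) (p : ℕ) : SimpleGraph V where
  Adj x y := x ≠ y ∧ G.Reachable x y ∧ G.dist x y = p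
  symm := by
    constructor
    rintro x y ⟨h1, h2, h3⟩
    exact ⟨h1.symm, h2.symm, by rwa [SimpleGraph.dist_comm]⟩
  loopless := by constructor; rintro x ⟨h1, -, -⟩; exact h1 rfl

/-- `x` is weakly `k`-accessible from `y` w.r.t. the linear order `L`. -/
def WeaklyAccessible (G : SimpleGraph V) (L : LinearOrder V) (k : ℕ) (x y : V) : Prop :=
  L.lt x y ∧ ∃ w : G.Walk x y, w.IsPath ∧ w.length ≤ k ∧
    ∀ z ∈ w.support, z ≠ x → z ≠ y → L.lt x z

/-- The weak `k`-colouring number. -/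
noncomputable def wcol (G : SimpleGraph V) (k : ℕ) : ℕ :=
  1 + sInf { m : ℕ | ∃ L : LinearOrder V, ∀ y : V,
      {x : V | WeaklyAccessible G L k x y}.ncard ≤ m }

/-! ### Auxiliary: greedy colouring along a well-founded relation -/

/-- Greedy colouring: each vertex gets the least natural number not used by its
`r`-neighbours that are `lt`-smaller. -/
noncomputable def greedyCol {α : Type*} (r : α → α → Prop) {lt : α → α → Prop}
    (wf : WellFounded lt) : α → ℕ :=
  wf.fix fun y ih => sInf {n : ℕ | ¬ ∃ s, ∃ _h : lt s y, r s y ∧ n = ih s _h}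

theorem greedyCol_def {α : Type*} (r : α → α → Prop) {lt : α → α → Prop}
    (wf : WellFounded lt) (y : α) :
    greedyCol r wf y
      = sInf {n : ℕ | ¬ ∃ s, ∃ _h : lt s y, r s y ∧ n = greedyCol r wf s} :=
  wf.fix_eq _ y

theorem greedyCol_ne {α : Type*} [Finite α] (r : α → α → Prop) {lt : α → α → Prop}
    (wf : WellFounded lt) {s y : α} (h : lt s y) (hr : r s y) :
    greedyCol r wf y ≠ greedyCol r wf s := by
  have hne : {n : ℕ | ¬ ∃ s, ∃ _h : lt s y, r s y ∧ n = greedyCol r wf s}.Nonempty := by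
    obtain ⟨n, hn⟩ := (Set.finite_range fun s : α => greedyCol r wf s).infinite_compl.nonempty
    exact ⟨n, fun ⟨t, _, _, he⟩ => hn ⟨t, he.symm⟩⟩
  have hmem := Nat.sInf_mem hne
  rw [← greedyCol_def] at hmem
  exact fun he => hmem ⟨s, h, hr, he⟩

theorem greedyCol_le {α : Type*} [Finite α] (r : α → α → Prop) {lt : α → α → Prop}
    (wf : WellFounded lt) (y : α) :
    greedyCol r wf y ≤ {s | lt s y ∧ r s y}.ncard := by
  rw [greedyCol_def]
  by_contra hcon
  rw [not_le] at hcon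
  set B := {s | lt s y ∧ r s y}.ncard with hB
  have hsub : (↑(Finset.range (B + 1)) : Set ℕ) ⊆
      (fun s => greedyCol r wf s) '' {s | lt s y ∧ r s y} := by
    intro n hn
    simp only [Finset.coe_range, Set.mem_Iio] at hn
    have hnA : n ∉ {n : ℕ | ¬ ∃ s, ∃ _h : lt s y, r s y ∧ n = greedyCol r wf s} := by
      intro hmem
      have := Nat.sInf_le hmem
      omega
    simp only [Set.mem_setOf_eq, not_not] at hnA
    obtain ⟨s, hlt, hrs, he⟩ := hnA
    exact ⟨s, ⟨hlt, hrs⟩, he.symm⟩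
  have h1 := Set.ncard_le_ncard hsub (Set.toFinite _)
  rw [Set.ncard_coe_finset, Finset.card_range] at h1
  have h2 := Set.ncard_image_le (f := fun s => greedyCol r wf s)
    (Set.toFinite {s | lt s y ∧ r s y})
  omega

/-! ### Auxiliary: the minimum of a ball -/

theorem exists_ballMin {V : Type*} [Fintype V] (G : SimpleGraph V) (L : LinearOrder V)
    (q : ℕ) :
    ∃ x : V → V, ∀ v, G.Reachable v (x v) ∧ G.dist v (x v) ≤ q ∧
      ∀ z, G.Reachable v z → G.dist v z ≤ q → L.le (x v) z := by
  classical
  letI := L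
  have hne : ∀ v : V, (Finset.univ.filter fun z => G.Reachable v z ∧ G.dist v z ≤ q).Nonempty :=
    fun v => ⟨v, Finset.mem_filter.mpr ⟨Finset.mem_univ v,
      Reachable.refl v, by simp [SimpleGraph.dist_self]⟩⟩
  refine ⟨fun v => (Finset.univ.filter fun z => G.Reachable v z ∧ G.dist v z ≤ q).min' (hne v),
    fun v => ?_⟩
  have hmem := Finset.min'_mem _ (hne v)
  rw [Finset.mem_filter] at hmem
  exact ⟨hmem.2.1, hmem.2.2, fun z h1 h2 =>
    Finset.min'_le _ z (Finset.mem_filter.mpr ⟨Finset.mem_univ z, h1, h2⟩)⟩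

/-! ### The key lemma -/

theorem key_wa {V : Type*} [Fintype V] (G : SimpleGraph V) (L : LinearOrder V) (q : ℕ)
    (x : V → V) (hx : ∀ v, G.Reachable v (x v) ∧ G.dist v (x v) ≤ q ∧
      ∀ z, G.Reachable v z → G.dist v z ≤ q → L.le (x v) z)
    {u v : V} (hr : G.Reachable u v) (hd : G.dist u v = 2 * q + 1) :
    x u ≠ x v ∧ (L.lt (x u) (x v) → WeaklyAccessible G L (4 * q + 1) (x u) (x v)) := by
  classical
  letI := L
  obtain ⟨ru, du, minu⟩ := hx u
  obtain ⟨rv, dv, minv⟩ := hx v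
  obtain ⟨Ru, hRu⟩ := ru.exists_walk_length_eq_dist
  obtain ⟨Rv, hRv⟩ := rv.exists_walk_length_eq_dist
  obtain ⟨P, hP⟩ := hr.exists_walk_length_eq_dist
  have hRulen : Ru.length ≤ q := by rw [hRu]; exact du
  have hRvlen : Rv.length ≤ q := by rw [hRv]; exact dv
  have hPlen : P.length = 2 * q + 1 := by rw [hP, hd]
  -- vertices on Ru are at distance ≤ q from u, hence ≥ x u
  have hsupRu : ∀ z ∈ Ru.support, L.le (x u) z := by
    intro z hz
    refine minu z ⟨Ru.takeUntil z hz⟩ ?_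
    calc G.dist u z ≤ (Ru.takeUntil z hz).length := SimpleGraph.dist_le _
      _ ≤ Ru.length := Walk.length_takeUntil_le Ru hz
      _ ≤ q := hRulen
  have hsupRv : ∀ z ∈ Rv.support, L.le (x v) z := by
    intro z hz
    refine minv z ⟨Rv.takeUntil z hz⟩ ?_
    calc G.dist v z ≤ (Rv.takeUntil z hz).length := SimpleGraph.dist_le _
      _ ≤ Rv.length := Walk.length_takeUntil_le Rv hz
      _ ≤ q := hRvlen
  -- x u ≠ x v
  have hxne : x u ≠ x v := by
    intro heq
    have hw : G.dist u v ≤ Ru.length + Rv.reverse.length :=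
      le_of_le_of_eq (SimpleGraph.dist_le (Ru.append ((Rv.reverse).copy heq.symm rfl)))
        (by rw [Walk.length_append, Walk.length_copy])
    rw [Walk.length_reverse] at hw
    omega
  refine ⟨hxne, fun hlt => ?_⟩
  -- the minimum vertex on P
  have humem : u ∈ P.support.toFinset := List.mem_toFinset.mpr P.start_mem_support
  set m := P.support.toFinset.min' ⟨u, humem⟩ with hmdef
  have hm : m ∈ P.support := List.mem_toFinset.mp (Finset.min'_mem _ _)
  have hmle : ∀ z ∈ P.support, L.le m z := fun z hz =>
    Finset.min'_le _ z (List.mem_toFinset.mpr hz)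
  have hab :
      (P.takeUntil m hm).length + (P.dropUntil m hm).length = 2 * q + 1 := by
    have := congrArg Walk.length (P.take_spec hm)
    rw [Walk.length_append] at this
    rw [this, hPlen]
  -- every vertex of P is ≥ x u  (using `hlt : x u < x v` when the minimum is close to v)
  have hPxu : ∀ z ∈ P.support, L.le (x u) z := by
    have hdum : G.dist u m ≤ (P.takeUntil m hm).length := SimpleGraph.dist_le _
    have hdvm : G.dist v m ≤ (P.dropUntil m hm).length := by
      have := SimpleGraph.dist_le (P.dropUntil m hm).reverse
      rwa [Walk.length_reverse] at this
    rcases le_or_gt (P.takeUntil m hm).length q with hA | hB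
    · intro z hz
      exact le_trans (minu m ⟨P.takeUntil m hm⟩ (le_trans hdum hA)) (hmle z hz)
    · have hBq : (P.dropUntil m hm).length ≤ q := by omega
      intro z hz
      exact le_trans (le_of_lt hlt)
        (le_trans (minv m ⟨(P.dropUntil m hm).reverse⟩ (le_trans hdvm hBq)) (hmle z hz))
  -- the connecting walk
  set W : G.Walk (x u) (x v) := Ru.reverse.append (P.append Rv) with hWdef
  have hWlen : W.length ≤ 4 * q + 1 := by
    rw [hWdef, Walk.length_append, Walk.length_append, Walk.length_reverse]
    omega
  have hWsup : ∀ z ∈ W.support, L.le (x u) z := by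
    intro z hz
    rw [hWdef, Walk.mem_support_append_iff, Walk.mem_support_append_iff,
      Walk.support_reverse, List.mem_reverse] at hz
    rcases hz with h | h | h
    · exact hsupRu z h
    · exact hPxu z h
    · exact le_trans (le_of_lt hlt) (hsupRv z h)
  exact ⟨hlt, W.bypass, Walk.bypass_isPath W,
    le_trans (Walk.length_bypass_le W) hWlen,
    fun z hz hzx _ =>
      lt_of_le_of_ne (hWsup z (Walk.support_bypass_subset W hz)) (Ne.symm hzx)⟩

/-- Theorem 3(a): for a class `K = (𝒦 i)` of finite graphs with bounded expansion, witnessed by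
constants `c k` bounding all weak `k`-colouring numbers, and any odd positive `p`, every graph in
the class satisfies `χ(G^[♮p]) ≤ c (2p-1)`; in particular the chromatic number of exact
distance-`p` graphs is bounded by a constant on the class. -/
theorem chromaticNumber_exactDistanceGraph_le_of_boundedExpansion_odd
    {ι : Type*} {Vert : ι → Type*} [∀ i, Fintype (Vert i)]
    (𝒦 : ∀ i, SimpleGraph (Vert i)) (c : ℕ → ℕ)
    (hbe : ∀ i, ∀ k : ℕ, 1 ≤ k → wcol (𝒦 i) k ≤ c k)
    (p : ℕ) (hp : Odd p) (i : ι) :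
    (exactDistanceGraph (𝒦 i) p).chromaticNumber ≤ (c (2 * p - 1) : ℕ∞) := by
  classical
  obtain ⟨q, hq⟩ := hp
  have h2p : 2 * p - 1 = 4 * q + 1 := by omega
  have hwc := hbe i (2 * p - 1) (by omega)
  rw [wcol] at hwc
  have hSne : {m : ℕ | ∃ L : LinearOrder (Vert i), ∀ y,
      {x | WeaklyAccessible (𝒦 i) L (2 * p - 1) x y}.ncard ≤ m}.Nonempty := by
    have L0 : LinearOrder (Vert i) :=
      LinearOrder.lift' (Fintype.equivFin (Vert i)) (Fintype.equivFin (Vert i)).injective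
    refine ⟨Fintype.card (Vert i), L0, fun y => ?_⟩
    have h1 := Set.ncard_le_ncard
      (Set.subset_univ {x | WeaklyAccessible (𝒦 i) L0 (2 * p - 1) x y}) Set.finite_univ
    rwa [Set.ncard_univ, Nat.card_eq_fintype_card] at h1
  obtain ⟨L, hL⟩ := Nat.sInf_mem hSne
  have hMlt : sInf {m : ℕ | ∃ L : LinearOrder (Vert i), ∀ y,
      {x | WeaklyAccessible (𝒦 i) L (2 * p - 1) x y}.ncard ≤ m} < c (2 * p - 1) := by omega
  obtain ⟨x, hx⟩ := exists_ballMin (𝒦 i) L q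
  letI := L
  have wf : WellFounded (fun a b : Vert i => L.lt a b) :=
    (Finite.to_wellFoundedLT (α := Vert i)).wf
  set F : Vert i → Vert i → Prop := fun s t => ∃ u v : Vert i,
    (exactDistanceGraph (𝒦 i) p).Adj u v ∧ s = x u ∧ t = x v with hF
  have key : ∀ {u v : Vert i}, (exactDistanceGraph (𝒦 i) p).Adj u v →
      x u ≠ x v ∧ (L.lt (x u) (x v) →
        WeaklyAccessible (𝒦 i) L (2 * p - 1) (x u) (x v)) := by
    intro u v huv
    obtain ⟨hne, hr, hd⟩ := huv
    have hk := key_wa (𝒦 i) L q x hx hr (by omega)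
    rw [h2p]
    exact hk
  have hband : ∀ y : Vert i, {s | L.lt s y ∧ F s y}.ncard ≤
      sInf {m : ℕ | ∃ L : LinearOrder (Vert i), ∀ y,
        {x | WeaklyAccessible (𝒦 i) L (2 * p - 1) x y}.ncard ≤ m} := by
    intro y
    refine le_trans (Set.ncard_le_ncard ?_ (Set.toFinite _)) (hL y)
    rintro s ⟨hlt, u, v, hadj, rfl, rfl⟩
    exact (key hadj).2 hlt
  have hgb : ∀ v, greedyCol F wf (x v) < c (2 * p - 1) := fun v =>
    lt_of_le_of_lt (le_trans (greedyCol_le F wf (x v)) (hband (x v))) hMlt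
  have hcol : ∀ {u v}, (exactDistanceGraph (𝒦 i) p).Adj u v →
      greedyCol F wf (x u) ≠ greedyCol F wf (x v) := by
    intro u v hadj
    rcases (key hadj).1.lt_or_gt with hlt | hlt
    · exact (greedyCol_ne F wf hlt ⟨u, v, hadj, rfl, rfl⟩).symm
    · exact greedyCol_ne F wf hlt ⟨v, u, hadj.symm, rfl, rfl⟩
  have hcolorable : (exactDistanceGraph (𝒦 i) p).Colorable (c (2 * p - 1)) :=
    ⟨SimpleGraph.Coloring.mk (fun v => ⟨greedyCol F wf (x v), hgb v⟩)
      (fun hadj hEq => hcol hadj (congrArg Fin.val hEq))⟩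
  exact hcolorable.chromaticNumber_le
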